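/- If A and B are d×d matrices, then with c₁ = -1/3, c₂ = 4/3 and S(h) = e^{(h/2)B}e^{hA}e^{(h/2)B}, the combination c₁S(h) + c₂S(h/2)² satisfies c₁S(h) + c₂S(h/2)² = e^{h(A+B)} + O(h⁵). -/

import Mathlib

attribute [local instance] Matrix.linftyOpNormedRing Matrix.linftyOpNormedAlgebra

open NormedSpace

open Polynomial

section Aux

variable {d : ℕ}

lemma norm_one_le_mat : ‖(1 : Matrix (Fin d) (Fin d) ℝ)‖ ≤ 1 := by
  rw [← Matrix.diagonal_one, Matrix.linfty_opNorm_diagonal]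
  exact (pi_norm_le_iff_of_nonneg zero_le_one).mpr fun i => by simp

lemma norm_pow_le_mat (M : Matrix (Fin d) (Fin d) ℝ) (k : ℕ) : ‖M ^ k‖ ≤ ‖M‖ ^ k := by
  rcases Nat.eq_zero_or_pos k with hk | hk
  · subst hk; rw [pow_zero, pow_zero]; exact norm_one_le_mat
  · exact norm_pow_le' M hk

noncomputable def Ppart (M : Matrix (Fin d) (Fin d) ℝ) (t : ℝ) : Matrix (Fin d) (Fin d) ℝ :=
  ∑ k ∈ Finset.range 5, (t ^ k / (k.factorial : ℝ)) • M ^ k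

lemma exp_smul_eq_tsum (M : Matrix (Fin d) (Fin d) ℝ) (t : ℝ) :
    exp (t • M) = ∑' n : ℕ, (t ^ n / (n.factorial : ℝ)) • M ^ n := by
  rw [exp_eq_tsum ℝ]
  exact tsum_congr fun n => by rw [_root_.smul_pow, smul_smul, div_eq_mul_inv, mul_comm]

lemma summable_aux (M : Matrix (Fin d) (Fin d) ℝ) (t : ℝ) :
    Summable (fun n : ℕ => (t ^ n / (n.factorial : ℝ)) • M ^ n) := by
  have h := expSeries_summable' (𝕂 := ℝ) (t • M)
  have e : ∀ n : ℕ, ((n.factorial : ℝ))⁻¹ • (t • M) ^ n = (t ^ n / (n.factorial : ℝ)) • M ^ n :=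
    fun n => by rw [_root_.smul_pow, smul_smul, div_eq_mul_inv, mul_comm]
  simp only [e] at h
  exact h

lemma norm_term_le (M : Matrix (Fin d) (Fin d) ℝ) (t : ℝ) (k : ℕ) :
    ‖(t ^ k / (k.factorial : ℝ)) • M ^ k‖ ≤ (|t| ^ k / (k.factorial : ℝ)) * ‖M‖ ^ k := by
  rw [norm_smul, Real.norm_eq_abs, abs_div, abs_pow, Nat.abs_cast]
  exact mul_le_mul_of_nonneg_left (norm_pow_le_mat M k) (by positivity)

lemma summable_bound (M : Matrix (Fin d) (Fin d) ℝ) :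
    Summable (fun n : ℕ => ‖M‖ ^ (n + 5) / (((n + 5).factorial : ℝ))) :=
  ((summable_nat_add_iff 5).mpr (Real.summable_pow_div_factorial ‖M‖))

lemma tsum_bound_le (M : Matrix (Fin d) (Fin d) ℝ) :
    (∑' n : ℕ, ‖M‖ ^ (n + 5) / (((n + 5).factorial : ℝ))) ≤ Real.exp ‖M‖ := by
  have hs : Summable (fun n : ℕ => ‖M‖ ^ n / ((n.factorial : ℝ))) :=
    Real.summable_pow_div_factorial ‖M‖
  have hsplit := Summable.sum_add_tsum_nat_add (f := fun n : ℕ => ‖M‖ ^ n / ((n.factorial : ℝ))) 5 hs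
  have hexp : Real.exp ‖M‖ = ∑' n : ℕ, ‖M‖ ^ n / ((n.factorial : ℝ)) := by
    rw [Real.exp_eq_exp_ℝ, exp_eq_tsum ℝ]
    exact tsum_congr fun n => by rw [smul_eq_mul, div_eq_mul_inv, mul_comm]
  rw [hexp, ← hsplit]
  have : (0 : ℝ) ≤ ∑ i ∈ Finset.range 5, ‖M‖ ^ i / ((i.factorial : ℝ)) := by positivity
  linarith

lemma tail_bound (M : Matrix (Fin d) (Fin d) ℝ) (t : ℝ) (ht : |t| ≤ 1) :
    ‖exp (t • M) - Ppart M t‖ ≤ Real.exp ‖M‖ * |t| ^ 5 := by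
  have hs : Summable (fun n : ℕ => (t ^ n / (n.factorial : ℝ)) • M ^ n) := summable_aux M t
  have hsplit := Summable.sum_add_tsum_nat_add (f := fun n : ℕ => (t ^ n / (n.factorial : ℝ)) • M ^ n) 5 hs
  have hmain : exp (t • M) - Ppart M t
      = ∑' n : ℕ, (t ^ (n + 5) / (((n + 5).factorial : ℝ))) • M ^ (n + 5) := by
    rw [exp_smul_eq_tsum, Ppart, ← hsplit]; abel
  rw [hmain]
  have hb : ∀ n : ℕ, ‖(t ^ (n + 5) / (((n + 5).factorial : ℝ))) • M ^ (n + 5)‖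
      ≤ |t| ^ 5 * (‖M‖ ^ (n + 5) / (((n + 5).factorial : ℝ))) := by
    intro n
    refine (norm_term_le M t (n + 5)).trans ?_
    rw [div_mul_eq_mul_div, mul_div_assoc]
    have h1 : |t| ^ (n + 5) ≤ |t| ^ 5 := pow_le_pow_of_le_one (abs_nonneg t) ht (by omega)
    exact mul_le_mul_of_nonneg_right h1 (by positivity)
  have hsb : Summable (fun n : ℕ => |t| ^ 5 * (‖M‖ ^ (n + 5) / (((n + 5).factorial : ℝ)))) :=
    (summable_bound M).mul_left _
  have hns : Summable (fun n : ℕ =>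
      ‖(t ^ (n + 5) / (((n + 5).factorial : ℝ))) • M ^ (n + 5)‖) :=
    Summable.of_nonneg_of_le (fun n => norm_nonneg _) hb hsb
  calc ‖∑' n : ℕ, (t ^ (n + 5) / (((n + 5).factorial : ℝ))) • M ^ (n + 5)‖
      ≤ ∑' n : ℕ, ‖(t ^ (n + 5) / (((n + 5).factorial : ℝ))) • M ^ (n + 5)‖ :=
        norm_tsum_le_tsum_norm hns
    _ ≤ ∑' n : ℕ, |t| ^ 5 * (‖M‖ ^ (n + 5) / (((n + 5).factorial : ℝ))) :=
        Summable.tsum_le_tsum hb hns hsb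
    _ = |t| ^ 5 * ∑' n : ℕ, (‖M‖ ^ (n + 5) / (((n + 5).factorial : ℝ))) := tsum_mul_left
    _ ≤ |t| ^ 5 * Real.exp ‖M‖ := by
        have := tsum_bound_le M
        have h5 : (0:ℝ) ≤ |t| ^ 5 := by positivity
        nlinarith
    _ = Real.exp ‖M‖ * |t| ^ 5 := by ring

noncomputable def pp (M : Matrix (Fin d) (Fin d) ℝ) (c : ℝ) : Polynomial (Matrix (Fin d) (Fin d) ℝ) :=
  ∑ k ∈ Finset.range 5, C ((c ^ k / (k.factorial : ℝ)) • M ^ k) * X ^ k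

noncomputable def ev (h : ℝ) : Polynomial (Matrix (Fin d) (Fin d) ℝ) →+* Matrix (Fin d) (Fin d) ℝ :=
  eval₂RingHom' (RingHom.id _) (h • 1) (fun a => (Commute.one_right a).smul_right h)

lemma ev_apply (h : ℝ) (p : Polynomial (Matrix (Fin d) (Fin d) ℝ)) :
    ev h p = eval₂ (RingHom.id _) (h • (1 : Matrix (Fin d) (Fin d) ℝ)) p := rfl

lemma ev_C_mul (h : ℝ) (r : ℝ) (p : Polynomial (Matrix (Fin d) (Fin d) ℝ)) :
    ev h (C (r • (1 : Matrix (Fin d) (Fin d) ℝ)) * p) = r • ev h p := by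
  rw [map_mul, ev_apply, eval₂_C]
  simp [smul_mul_assoc]

lemma ev_pp (h : ℝ) (M : Matrix (Fin d) (Fin d) ℝ) (c : ℝ) :
    ev h (pp M c) = Ppart M (c * h) := by
  rw [pp, map_sum, Ppart]
  refine Finset.sum_congr rfl fun k _ => ?_
  rw [map_mul, map_pow, ev_apply, ev_apply, eval₂_C, eval₂_X, RingHom.id_apply]
  rw [_root_.smul_pow, one_pow, mul_smul_comm, mul_one, smul_smul, mul_pow]
  congr 1
  ring

lemma ev_X_pow_mul (h : ℝ) (G : Polynomial (Matrix (Fin d) (Fin d) ℝ)) :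
    ev h (X ^ 5 * G) = h ^ 5 • ev h G := by
  rw [map_mul, map_pow, ev_apply (p := X), eval₂_X, _root_.smul_pow, one_pow, smul_mul_assoc,
    one_mul]

lemma norm_ev_le (h : ℝ) (hh : |h| ≤ 1) (G : Polynomial (Matrix (Fin d) (Fin d) ℝ)) :
    ‖ev h G‖ ≤ ∑ k ∈ Finset.range (G.natDegree + 1), ‖G.coeff k‖ := by
  rw [ev_apply, eval₂_eq_sum_range]
  refine (norm_sum_le _ _).trans (Finset.sum_le_sum fun k _ => ?_)
  refine (norm_mul_le _ _).trans ?_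
  rw [RingHom.id_apply, _root_.smul_pow, one_pow, norm_smul, Real.norm_eq_abs, abs_pow]
  have h1 : |h| ^ k ≤ 1 := pow_le_one₀ (abs_nonneg h) hh
  have h2 : ‖(1 : Matrix (Fin d) (Fin d) ℝ)‖ ≤ 1 := norm_one_le_mat
  have h3 : |h| ^ k * ‖(1 : Matrix (Fin d) (Fin d) ℝ)‖ ≤ 1 :=
    mul_le_one₀ h1 (norm_nonneg _) h2
  calc ‖G.coeff k‖ * (|h| ^ k * ‖(1 : Matrix (Fin d) (Fin d) ℝ)‖) ≤ ‖G.coeff k‖ * 1 :=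
        mul_le_mul_of_nonneg_left h3 (norm_nonneg _)
    _ = ‖G.coeff k‖ := mul_one _

lemma ev_C (h : ℝ) (m : Matrix (Fin d) (Fin d) ℝ) : ev h (C m) = m := by
  rw [ev_apply, eval₂_C, RingHom.id_apply]

noncomputable def Epoly (A B : Matrix (Fin d) (Fin d) ℝ) : Polynomial (Matrix (Fin d) (Fin d) ℝ) :=
  C ((-1/3 : ℝ) • (1 : Matrix (Fin d) (Fin d) ℝ)) * (pp B (1/2) * pp A 1 * pp B (1/2))
  + C ((4/3 : ℝ) • (1 : Matrix (Fin d) (Fin d) ℝ)) *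
      ((pp B (1/4) * pp A (1/2) * pp B (1/4)) * (pp B (1/4) * pp A (1/2) * pp B (1/4)))
  - pp (A + B) 1

lemma coeff_pp (M : Matrix (Fin d) (Fin d) ℝ) (c : ℝ) (n : ℕ) :
    (pp M c).coeff n = if n < 5 then (c ^ n / (n.factorial : ℝ)) • M ^ n else 0 := by
  simp only [pp, finset_sum_coeff, coeff_C_mul, coeff_X_pow, mul_ite, mul_one, mul_zero,
    smul_eq_mul]
  rw [Finset.sum_ite_eq (Finset.range 5)]
  simp [Finset.mem_range]

set_option maxHeartbeats 4000000 in
lemma coeff_Epoly_lt (A B : Matrix (Fin d) (Fin d) ℝ) : ∀ n < 5, (Epoly A B).coeff n = 0 := by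
  intro n hn
  interval_cases n <;>
  · simp only [Epoly, coeff_sub, coeff_add, coeff_C_mul, coeff_mul,
      Finset.Nat.sum_antidiagonal_eq_sum_range_succ_mk, Finset.sum_range_succ,
      Finset.sum_range_zero, coeff_pp]
    norm_num [Nat.factorial]
    simp (config := { failIfUnchanged := false }) only [smul_mul_assoc, mul_smul_comm, smul_smul,
      pow_succ, pow_zero, one_mul, mul_one, mul_add, add_mul, mul_assoc]
    match_scalars <;> ring

lemma poly_bound (A B : Matrix (Fin d) (Fin d) ℝ) : ∃ CG : ℝ, 0 ≤ CG ∧ ∀ h : ℝ, |h| ≤ 1 →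
    ‖(-1/3 : ℝ) • (Ppart B (h/2) * Ppart A h * Ppart B (h/2))
      + (4/3 : ℝ) • ((Ppart B (h/4) * Ppart A (h/2) * Ppart B (h/4))
          * (Ppart B (h/4) * Ppart A (h/2) * Ppart B (h/4)))
      - Ppart (A + B) h‖ ≤ CG * |h| ^ 5 := by
  obtain ⟨G, hG⟩ := X_pow_dvd_iff.mpr (coeff_Epoly_lt A B)
  refine ⟨∑ k ∈ Finset.range (G.natDegree + 1), ‖G.coeff k‖,
    Finset.sum_nonneg fun _ _ => norm_nonneg _, fun h hh => ?_⟩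
  have key : ev h (Epoly A B)
      = (-1/3 : ℝ) • (Ppart B (h/2) * Ppart A h * Ppart B (h/2))
      + (4/3 : ℝ) • ((Ppart B (h/4) * Ppart A (h/2) * Ppart B (h/4))
          * (Ppart B (h/4) * Ppart A (h/2) * Ppart B (h/4)))
      - Ppart (A + B) h := by
    simp only [Epoly, map_sub, map_add, map_mul, ev_pp, ev_C, smul_mul_assoc, one_mul]
    rw [show (1/2 : ℝ) * h = h/2 by ring, show (1/4 : ℝ) * h = h/4 by ring]
  rw [← key, hG, ev_X_pow_mul, norm_smul, Real.norm_eq_abs, abs_pow, mul_comm]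
  exact mul_le_mul_of_nonneg_right (norm_ev_le h hh G) (by positivity)

lemma Ppart_norm_le (M : Matrix (Fin d) (Fin d) ℝ) (t : ℝ) (ht : |t| ≤ 1) :
    ‖Ppart M t‖ ≤ Real.exp ‖M‖ := by
  refine (norm_sum_le _ _).trans ?_
  refine le_trans (Finset.sum_le_sum fun k _ => (norm_term_le M t k).trans ?_)
    (Real.sum_le_exp_of_nonneg (norm_nonneg M) 5)
  have h1 : |t| ^ k ≤ 1 := pow_le_one₀ (abs_nonneg t) ht
  have h2 : (0:ℝ) < (k.factorial : ℝ) := by positivity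
  rw [div_mul_eq_mul_div, div_le_div_iff₀ h2 h2]
  have hm := pow_nonneg (norm_nonneg M) k
  nlinarith [mul_le_mul_of_nonneg_right h1 (mul_nonneg hm h2.le)]

lemma exp_norm_le (M : Matrix (Fin d) (Fin d) ℝ) (t : ℝ) (ht : |t| ≤ 1) :
    ‖exp (t • M)‖ ≤ 2 * Real.exp ‖M‖ := by
  have h1 := tail_bound M t ht
  have h2 := Ppart_norm_le M t ht
  have h3 : ‖exp (t • M)‖ ≤ ‖exp (t • M) - Ppart M t‖ + ‖Ppart M t‖ := by
    have := norm_add_le (exp (t • M) - Ppart M t) (Ppart M t)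
    simpa using this
  have h4 : |t| ^ 5 ≤ 1 := pow_le_one₀ (abs_nonneg t) ht
  nlinarith [Real.exp_pos ‖M‖]

lemma mul_close (x y a b : Matrix (Fin d) (Fin d) ℝ) :
    ‖x * y - a * b‖ ≤ ‖x‖ * ‖y - b‖ + ‖x - a‖ * ‖b‖ := by
  have e : x * y - a * b = x * (y - b) + (x - a) * b := by noncomm_ring
  rw [e]
  exact (norm_add_le _ _).trans (add_le_add (norm_mul_le _ _) (norm_mul_le _ _))

lemma mul_close_bound {x y a b : Matrix (Fin d) (Fin d) ℝ} {Kx Kb u v : ℝ}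
    (hx : ‖x‖ ≤ Kx) (hb : ‖b‖ ≤ Kb) (h1 : ‖x - a‖ ≤ u) (h2 : ‖y - b‖ ≤ v)
    (hKx : 0 ≤ Kx) (hKb : 0 ≤ Kb) :
    ‖x * y - a * b‖ ≤ Kx * v + u * Kb :=
  (mul_close x y a b).trans
    (add_le_add (mul_le_mul hx h2 (norm_nonneg _) hKx) (mul_le_mul h1 hb (norm_nonneg _)
      ((norm_nonneg _).trans h1)))

lemma norm_mul_bound {x y : Matrix (Fin d) (Fin d) ℝ} {Kx Ky : ℝ}
    (hx : ‖x‖ ≤ Kx) (hy : ‖y‖ ≤ Ky) (hKx : 0 ≤ Kx) :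
    ‖x * y‖ ≤ Kx * Ky :=
  (norm_mul_le _ _).trans (mul_le_mul hx hy (norm_nonneg _) hKx)

lemma assemble {x1 x2 y1 y2 p1 p2 q1 q2 L PL : Matrix (Fin d) (Fin d) ℝ}
    {KA KB KAB CG t : ℝ} (hKA : 0 < KA) (hKB : 0 < KB) (ht : 0 ≤ t)
    (e1 : ‖x1 - p1‖ ≤ KB * t) (e2 : ‖x2 - p2‖ ≤ KA * t)
    (e3 : ‖y1 - q1‖ ≤ KB * t) (e4 : ‖y2 - q2‖ ≤ KA * t)
    (eL : ‖L - PL‖ ≤ KAB * t)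
    (nx1 : ‖x1‖ ≤ 2 * KB) (nx2 : ‖x2‖ ≤ 2 * KA)
    (ny1 : ‖y1‖ ≤ 2 * KB) (ny2 : ‖y2‖ ≤ 2 * KA)
    (np1 : ‖p1‖ ≤ KB) (np2 : ‖p2‖ ≤ KA) (nq1 : ‖q1‖ ≤ KB) (nq2 : ‖q2‖ ≤ KA)
    (hR : ‖(-1/3 : ℝ) • (p1 * p2 * p1) + (4/3 : ℝ) • ((q1 * q2 * q1) * (q1 * q2 * q1)) - PL‖
      ≤ CG * t) :
    ‖(-1/3 : ℝ) • (x1 * x2 * x1) + (4/3 : ℝ) • ((y1 * y2 * y1) * (y1 * y2 * y1)) - L‖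
      ≤ (7/3 * KA * KB^2 + 84 * KA^2 * KB^4 + KAB + CG) * t := by
  have d12 : ‖x1 * x2 - p1 * p2‖ ≤ 3 * (KA * KB) * t :=
    (mul_close_bound nx1 np2 e1 e2 (by positivity) hKA.le).trans_eq (by ring)
  have nx12 : ‖x1 * x2‖ ≤ 4 * (KA * KB) :=
    (norm_mul_bound nx1 nx2 (by positivity)).trans_eq (by ring)
  have dS : ‖x1 * x2 * x1 - p1 * p2 * p1‖ ≤ 7 * (KA * KB^2) * t :=
    (mul_close_bound nx12 np1 d12 e1 (by positivity) hKB.le).trans_eq (by ring)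
  have d12' : ‖y1 * y2 - q1 * q2‖ ≤ 3 * (KA * KB) * t :=
    (mul_close_bound ny1 nq2 e3 e4 (by positivity) hKA.le).trans_eq (by ring)
  have ny12 : ‖y1 * y2‖ ≤ 4 * (KA * KB) :=
    (norm_mul_bound ny1 ny2 (by positivity)).trans_eq (by ring)
  have dS2 : ‖y1 * y2 * y1 - q1 * q2 * q1‖ ≤ 7 * (KA * KB^2) * t :=
    (mul_close_bound ny12 nq1 d12' e3 (by positivity) hKB.le).trans_eq (by ring)
  have nS2 : ‖y1 * y2 * y1‖ ≤ 8 * (KA * KB^2) :=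
    (norm_mul_bound ny12 ny1 (by positivity)).trans_eq (by ring)
  have nQ2 : ‖q1 * q2 * q1‖ ≤ KA * KB^2 := by
    have h1 : ‖q1 * q2‖ ≤ KB * KA := norm_mul_bound nq1 nq2 hKB.le
    exact (norm_mul_bound h1 nq1 (by positivity)).trans_eq (by ring)
  have dSq : ‖(y1 * y2 * y1) * (y1 * y2 * y1) - (q1 * q2 * q1) * (q1 * q2 * q1)‖
      ≤ 63 * (KA^2 * KB^4) * t :=
    (mul_close_bound nS2 nQ2 dS2 dS2 (by positivity) (by positivity)).trans_eq (by ring)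
  have decomp : (-1/3 : ℝ) • (x1 * x2 * x1) + (4/3 : ℝ) • ((y1 * y2 * y1) * (y1 * y2 * y1)) - L
      = (-1/3 : ℝ) • (x1 * x2 * x1 - p1 * p2 * p1)
      + (4/3 : ℝ) • ((y1 * y2 * y1) * (y1 * y2 * y1) - (q1 * q2 * q1) * (q1 * q2 * q1))
      - (L - PL)
      + ((-1/3 : ℝ) • (p1 * p2 * p1) + (4/3 : ℝ) • ((q1 * q2 * q1) * (q1 * q2 * q1)) - PL) := by
    module
  rw [decomp]
  have tri : ∀ a b c r : Matrix (Fin d) (Fin d) ℝ,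
      ‖a + b - c + r‖ ≤ ‖a‖ + ‖b‖ + ‖c‖ + ‖r‖ := by
    intro a b c r
    calc ‖a + b - c + r‖ ≤ ‖a + b - c‖ + ‖r‖ := norm_add_le _ _
      _ ≤ ‖a + b‖ + ‖c‖ + ‖r‖ := by linarith [norm_sub_le (a + b) c]
      _ ≤ ‖a‖ + ‖b‖ + ‖c‖ + ‖r‖ := by linarith [norm_add_le a b]
  refine (tri _ _ _ _).trans ?_
  rw [norm_smul, norm_smul, Real.norm_eq_abs, Real.norm_eq_abs,
    show |(-1/3 : ℝ)| = 1/3 by norm_num, show |(4/3 : ℝ)| = 4/3 by norm_num]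
  have g1 : (1/3 : ℝ) * ‖x1 * x2 * x1 - p1 * p2 * p1‖ ≤ 1/3 * (7 * (KA * KB^2) * t) := by
    linarith
  have g2 : (4/3 : ℝ) * ‖(y1 * y2 * y1) * (y1 * y2 * y1)
      - (q1 * q2 * q1) * (q1 * q2 * q1)‖ ≤ 4/3 * (63 * (KA^2 * KB^4) * t) := by
    linarith
  have : (1/3 : ℝ) * (7 * (KA * KB^2) * t) + 4/3 * (63 * (KA^2 * KB^4) * t) + KAB * t + CG * t
      = (7/3 * KA * KB^2 + 84 * KA^2 * KB^4 + KAB + CG) * t := by ring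
  linarith

end Aux

/-- Fourth-order accuracy of the MPE combination -1/3·S(h) + 4/3·S(h/2)²
    of the Strang splitting S(h) = e^{(h/2)B} e^{hA} e^{(h/2)B}:
    it equals e^{h(A+B)} + O(h⁵). -/
theorem mpe4_fourth_order (d : ℕ) (A B : Matrix (Fin d) (Fin d) ℝ) :
    let S : ℝ → Matrix (Fin d) (Fin d) ℝ :=
      fun h => exp ((h / 2) • B) * exp (h • A) * exp ((h / 2) • B)
    ∃ C ε : ℝ, 0 < C ∧ 0 < ε ∧ ∀ h : ℝ, |h| < ε →
      ‖(-1/3 : ℝ) • S h + (4/3 : ℝ) • (S (h / 2) * S (h / 2))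
        - exp (h • (A + B))‖ ≤ C * |h| ^ 5 := by
  intro S
  have hS : ∀ t : ℝ, S t = exp ((t / 2) • B) * exp (t • A) * exp ((t / 2) • B) :=
    fun t => rfl
  have hKApos : 0 < Real.exp ‖A‖ := Real.exp_pos _
  have hKBpos : 0 < Real.exp ‖B‖ := Real.exp_pos _
  obtain ⟨CG, hCG0, hCG⟩ := poly_bound A B
  refine ⟨7/3 * Real.exp ‖A‖ * (Real.exp ‖B‖)^2 + 84 * (Real.exp ‖A‖)^2 * (Real.exp ‖B‖)^4
      + Real.exp ‖A + B‖ + CG + 1, 1, by positivity, one_pos, fun h hh => ?_⟩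
  have hh1 : |h| ≤ 1 := le_of_lt hh
  have h5 : (0:ℝ) ≤ |h| ^ 5 := by positivity
  have habs2 : |h / 2| ≤ |h| := by
    rw [abs_div, show |(2:ℝ)| = 2 by norm_num]
    linarith [abs_nonneg h]
  have habs4 : |h / 4| ≤ |h| := by
    rw [abs_div, show |(4:ℝ)| = 4 by norm_num]
    linarith [abs_nonneg h]
  have hh2 : |h / 2| ≤ 1 := habs2.trans hh1
  have hh4 : |h / 4| ≤ 1 := habs4.trans hh1
  have hp2 : |h / 2| ^ 5 ≤ |h| ^ 5 := pow_le_pow_left₀ (abs_nonneg _) habs2 5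
  have hp4 : |h / 4| ^ 5 ≤ |h| ^ 5 := pow_le_pow_left₀ (abs_nonneg _) habs4 5
  have key := assemble (d := d)
    (x1 := exp ((h/2) • B)) (x2 := exp (h • A))
    (y1 := exp ((h/4) • B)) (y2 := exp ((h/2) • A))
    (p1 := Ppart B (h/2)) (p2 := Ppart A h) (q1 := Ppart B (h/4)) (q2 := Ppart A (h/2))
    (L := exp (h • (A + B))) (PL := Ppart (A + B) h) (t := |h| ^ 5)
    hKApos hKBpos h5
    ((tail_bound B (h/2) hh2).trans (mul_le_mul_of_nonneg_left hp2 hKBpos.le))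
    (tail_bound A h hh1)
    ((tail_bound B (h/4) hh4).trans (mul_le_mul_of_nonneg_left hp4 hKBpos.le))
    ((tail_bound A (h/2) hh2).trans (mul_le_mul_of_nonneg_left hp2 hKApos.le))
    (tail_bound (A + B) h hh1)
    (exp_norm_le B (h/2) hh2) (exp_norm_le A h hh1)
    (exp_norm_le B (h/4) hh4) (exp_norm_le A (h/2) hh2)
    (Ppart_norm_le B (h/2) hh2) (Ppart_norm_le A h hh1)
    (Ppart_norm_le B (h/4) hh4) (Ppart_norm_le A (h/2) hh2)
    (hCG h hh1)
  rw [hS h, hS (h/2), show h/2/2 = h/4 by ring]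
  refine key.trans ?_
  have hsum : 7/3 * Real.exp ‖A‖ * (Real.exp ‖B‖)^2 + 84 * (Real.exp ‖A‖)^2 * (Real.exp ‖B‖)^4
      + Real.exp ‖A + B‖ + CG
      ≤ 7/3 * Real.exp ‖A‖ * (Real.exp ‖B‖)^2 + 84 * (Real.exp ‖A‖)^2 * (Real.exp ‖B‖)^4
      + Real.exp ‖A + B‖ + CG + 1 := by linarith
  exact mul_le_mul_of_nonneg_right hsum h5
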